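/- Let n ≥ 2 be an integer, let z, a, b be real numbers, and let x_1,…,x_n and y_1,…,y_n be real numbers. Let K be the (n+1)×(n+1) real matrix with rows and columns indexed by 0,1,…,n whose (0,0) entry is z, whose (0,j) entry is y_j and whose (i,0) entry is x_i for 1 ≤ i, j ≤ n, and whose (i,j) entry for 1 ≤ i, j ≤ n equals b if i = j and a if i ≠ j. Then det K = (b−a)^(n−2) · [ ((n−1)a + b) · ( z(b−a) − Σ_{j=1}^n x_j y_j ) + a · (Σ_{j=1}^n x_j) · (Σ_{j=1}^n y_j) ]. -/

import Mathlib

open Matrix Polynomial Finset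

private lemma sum_ite_ite_aux {n : ℕ} (i k : Fin n) (p q r s : ℝ) :
    ∑ j, (if i = j then p else q) * (if j = k then r else s)
      = n * (q * s) + q * (r - s) + s * (p - q)
        + (if i = k then (p - q) * (r - s) else 0) := by
  have h : ∀ j : Fin n, (if i = j then p else q) * (if j = k then r else s)
      = q * s + q * (if j = k then r - s else 0) + (if i = j then p - q else 0) * s
        + (if i = j then p - q else 0) * (if j = k then r - s else 0) := by
    intro j
    by_cases h1 : i = j <;> by_cases h2 : j = k
    · rw [if_pos h1, if_pos h2, if_pos h1, if_pos h2]; ring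
    · rw [if_pos h1, if_neg h2, if_pos h1, if_neg h2]; ring
    · rw [if_neg h1, if_pos h2, if_neg h1, if_pos h2]; ring
    · rw [if_neg h1, if_neg h2, if_neg h1, if_neg h2]; ring
  simp only [h, Finset.sum_add_distrib, Finset.sum_const, Finset.card_univ,
    Fintype.card_fin, nsmul_eq_mul, ← Finset.mul_sum, ← Finset.sum_mul]
  rw [Finset.sum_ite_eq' Finset.univ k (fun _ => r - s)]
  rw [Finset.sum_ite_eq Finset.univ i (fun _ => p - q)]
  simp only [Finset.mem_univ, if_true]
  by_cases h3 : i = k <;>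
    simp only [h3, if_true, if_false, mul_ite, ite_mul, mul_zero, zero_mul,
      Finset.sum_ite_eq' Finset.univ k, Finset.mem_univ] <;> ring

private lemma key_generic (n : ℕ) (hn : 2 ≤ n) (z a b : ℝ) (x y : Fin n → ℝ)
    (hb : b - a ≠ 0) (hb2 : (n : ℝ) * a + (b - a) ≠ 0) :
    (Matrix.fromBlocks (Matrix.of fun _ _ : Fin 1 => z) (Matrix.of fun _ j => y j)
      (Matrix.of fun i _ => x i)
      (Matrix.of fun i j : Fin n => if i = j then b else a)).det
    = (b - a) ^ (n - 2) *
      ((((n : ℝ) - 1) * a + b) * (z * (b - a) - ∑ j, x j * y j)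
        + a * (∑ j, x j) * (∑ j, y j)) := by
  set Δ : ℝ := (b - a) * ((n : ℝ) * a + (b - a)) with hΔdef
  have hΔ : Δ ≠ 0 := mul_ne_zero hb hb2
  set c : ℝ := ((b - a) + ((n : ℝ) - 1) * a) / Δ with hc
  set d : ℝ := -a / Δ with hd
  set Dm : Matrix (Fin n) (Fin n) ℝ := Matrix.of fun i j => if i = j then b else a with hDm
  set Em : Matrix (Fin n) (Fin n) ℝ := Matrix.of fun i j => if i = j then c else d with hEm
  have hna : (n : ℝ) * a + (b - a) = (b - a) + ((n : ℝ) - 1) * a + a := by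
    have : (1 : ℝ) ≤ (n : ℝ) := by exact_mod_cast Nat.one_le_of_lt hn
    ring
  have hDE : Dm * Em = 1 := by
    ext i k
    simp only [Matrix.mul_apply, Matrix.of_apply, Matrix.one_apply, hDm, hEm]
    rw [sum_ite_ite_aux]
    by_cases h : i = k
    · simp only [h, if_true]
      rw [hc, hd, hΔdef]
      field_simp [hc, hd, hΔdef]
      ring
    · simp only [h, if_false]
      field_simp [hc, hd, hΔdef]
      ring
  have hED : Em * Dm = 1 := by
    ext i k
    simp only [Matrix.mul_apply, Matrix.of_apply, Matrix.one_apply, hDm, hEm]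
    rw [sum_ite_ite_aux]
    by_cases h : i = k
    · simp only [h, if_true]
      rw [hc, hd, hΔdef]
      field_simp [hc, hd, hΔdef]
      ring
    · simp only [h, if_false]
      field_simp [hc, hd, hΔdef]
      ring
  haveI : Invertible Dm := ⟨Em, hED, hDE⟩
  have hinv : (⅟ Dm : Matrix (Fin n) (Fin n) ℝ) = Em := invOf_eq_right_inv hDE
  have hdetD : Dm.det = (b - a) ^ n * (1 + (n : ℝ) * (a / (b - a))) := by
    have hD2 : Dm = (b - a) • (1 + Matrix.replicateCol Unit (fun _ => a / (b - a)) *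
        Matrix.replicateRow Unit (fun _ => (1 : ℝ))) := by
      ext i j
      simp only [hDm, Matrix.of_apply, Matrix.smul_apply, Matrix.add_apply,
        Matrix.mul_apply, Matrix.replicateCol_apply, Matrix.replicateRow_apply, smul_eq_mul,
        Finset.univ_unique, Finset.sum_singleton, mul_one]
      by_cases h : i = j
      · rw [if_pos h, h, Matrix.one_apply_eq]; field_simp; ring
      · rw [if_neg h, Matrix.one_apply_ne h]; field_simp; ring
    rw [hD2, Matrix.det_smul, Matrix.det_one_add_replicateCol_mul_replicateRow]
    simp only [dotProduct, one_mul, Finset.sum_const, Finset.card_univ,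
      Fintype.card_fin, nsmul_eq_mul, smul_eq_mul]
  have hent : ((Matrix.of fun _ _ : Fin 1 => z) -
      (Matrix.of fun (_ : Fin 1) j => y j) * Em * (Matrix.of fun i (_ : Fin 1) => x i)) 0 0
      = z - ((∑ j, y j) * d * (∑ j, x j) + (c - d) * ∑ j, x j * y j) := by
    have h1 : ∀ j : Fin n, (∑ k, y k * (if k = j then c else d))
        = (∑ k, y k) * d + y j * (c - d) := by
      intro j
      have h2 : ∀ k : Fin n, y k * (if k = j then c else d)
          = y k * d + (if k = j then y k * (c - d) else 0) := by
        intro k; by_cases h : k = j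
        · rw [if_pos h, if_pos h]; ring
        · rw [if_neg h, if_neg h]; ring
      simp only [h2, Finset.sum_add_distrib, ← Finset.sum_mul,
        Finset.sum_ite_eq' Finset.univ j (fun k => y k * (c - d)), Finset.mem_univ, if_true]
    have h3 : ∀ j : Fin n, ((∑ k, y k) * d + y j * (c - d)) * x j
        = (∑ k, y k) * d * x j + (c - d) * (x j * y j) := fun j => by ring
    simp only [Matrix.sub_apply, Matrix.mul_apply, Matrix.of_apply, hEm]
    simp only [h1, h3, Finset.sum_add_distrib, ← Finset.mul_sum]
    try ring
  rw [Matrix.det_fromBlocks₂₂, hinv, hdetD]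
  rw [show ((Matrix.of fun _ _ : Fin 1 => z) -
      (Matrix.of fun (_ : Fin 1) j => y j) * Em * (Matrix.of fun i (_ : Fin 1) => x i)).det
      = ((Matrix.of fun _ _ : Fin 1 => z) -
      (Matrix.of fun (_ : Fin 1) j => y j) * Em * (Matrix.of fun i (_ : Fin 1) => x i)) 0 0
      from Matrix.det_fin_one _, hent]
  obtain ⟨m, rfl⟩ : ∃ m, n = m + 2 := ⟨n - 2, by omega⟩
  set w : ℝ := b + ((m : ℝ) + 1) * a with hw
  have hwne : w ≠ 0 := by
    intro h0
    apply hb2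
    push_cast
    rw [hw] at h0
    linarith
  have hΔw : Δ = (b - a) * w := by rw [hΔdef, hw]; push_cast; ring
  have hcd : c - d = 1 / (b - a) := by
    rw [hc, hd, hΔw]
    field_simp
    push_cast
    ring
  have hdval : d = -a / ((b - a) * w) := by rw [hd, hΔw]
  have h4 : (1 : ℝ) + (↑(m + 2) : ℝ) * (a / (b - a)) = w / (b - a) := by
    rw [hw]; field_simp; push_cast; ring
  rw [hcd, hdval, h4, Nat.add_sub_cancel]
  field_simp
  rw [hw]
  push_cast
  ring
private lemma key (n : ℕ) (hn : 2 ≤ n) (z a b : ℝ) (x y : Fin n → ℝ) :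
    (Matrix.fromBlocks (Matrix.of fun _ _ : Fin 1 => z) (Matrix.of fun _ j => y j)
      (Matrix.of fun i _ => x i)
      (Matrix.of fun i j : Fin n => if i = j then b else a)).det
    = (b - a) ^ (n - 2) *
      ((((n : ℝ) - 1) * a + b) * (z * (b - a) - ∑ j, x j * y j)
        + a * (∑ j, x j) * (∑ j, y j)) := by
  set P : ℝ[X] := (Matrix.fromBlocks (Matrix.of fun _ _ : Fin 1 => (C z : ℝ[X]))
      (Matrix.of fun _ j => C (y j)) (Matrix.of fun i _ => C (x i))
      (Matrix.of fun i j : Fin n => if i = j then X else C a)).det with hP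
  set Q : ℝ[X] := (X - C a) ^ (n - 2) *
      ((C ((n : ℝ) - 1) * C a + X) * (C z * (X - C a) - C (∑ j, x j * y j))
        + C a * C (∑ j, x j) * C (∑ j, y j)) with hQ
  have hevalP : ∀ t : ℝ, Polynomial.eval t P =
      (Matrix.fromBlocks (Matrix.of fun _ _ : Fin 1 => z) (Matrix.of fun _ j => y j)
        (Matrix.of fun i _ => x i)
        (Matrix.of fun i j : Fin n => if i = j then t else a)).det := by
    intro t
    rw [hP, ← Polynomial.coe_evalRingHom, RingHom.map_det]
    congr 1
    ext i j
    cases i <;> cases j <;>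
      simp [Matrix.map_apply, apply_ite (Polynomial.eval t)]
  have hevalQ : ∀ t : ℝ, Polynomial.eval t Q =
      (t - a) ^ (n - 2) *
        ((((n : ℝ) - 1) * a + t) * (z * (t - a) - ∑ j, x j * y j)
          + a * (∑ j, x j) * (∑ j, y j)) := by
    intro t
    simp only [hQ, Polynomial.eval_mul, Polynomial.eval_pow, Polynomial.eval_sub,
      Polynomial.eval_add, Polynomial.eval_X, Polynomial.eval_C]
  have hPQ : P = Q := by
    have hroot : ∀ t : ℝ, t ≠ a → (n : ℝ) * a + (t - a) ≠ 0 → (P - Q).IsRoot t := by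
      intro t ht1 ht2
      have := key_generic n hn z a t x y (sub_ne_zero.mpr ht1) ht2
      simp only [Polynomial.IsRoot, Polynomial.eval_sub, hevalP, hevalQ, this, sub_self]
    have hinf : {t : ℝ | (P - Q).IsRoot t}.Infinite := by
      apply Set.Infinite.mono (s := ({a, a - (n : ℝ) * a} : Set ℝ)ᶜ)
      · intro t ht
        simp only [Set.mem_compl_iff, Set.mem_insert_iff, Set.mem_singleton_iff, not_or] at ht
        exact hroot t ht.1 (by intro h0; apply ht.2; linarith)
      · exact Set.Finite.infinite_compl (Set.toFinite _)
    have h0 := Polynomial.eq_zero_of_infinite_isRoot _ hinf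
    exact sub_eq_zero.mp h0
  have := hevalP b
  rw [hPQ, hevalQ b] at this
  exact this.symm

theorem stmt_0 (n : ℕ) (hn : 2 ≤ n) (z a b : ℝ) (x y : Fin n → ℝ)
    (K : Matrix (Fin (n + 1)) (Fin (n + 1)) ℝ)
    (hK00 : K 0 0 = z)
    (hK0j : ∀ j : Fin n, K 0 j.succ = y j)
    (hKi0 : ∀ i : Fin n, K i.succ 0 = x i)
    (hKij : ∀ i j : Fin n, K i.succ j.succ = if i = j then b else a) :
    K.det = (b - a) ^ (n - 2) *
      ((((n : ℝ) - 1) * a + b) * (z * (b - a) - ∑ j, x j * y j)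
        + a * (∑ j, x j) * (∑ j, y j)) := by
  have hcomm : 1 + n = n + 1 := Nat.add_comm 1 n
  set e : Fin 1 ⊕ Fin n ≃ Fin (n + 1) := finSumFinEquiv.trans (finCongr hcomm) with he
  have he0 : ∀ i : Fin 1, e (Sum.inl i) = 0 := by
    intro i
    have : i = 0 := Subsingleton.elim i 0
    subst this
    apply Fin.ext
    simp [he]
  have heS : ∀ j : Fin n, e (Sum.inr j) = j.succ := by
    intro j
    apply Fin.ext
    simp [he, Fin.val_succ]
    try omega
  have hsub : K.submatrix e e = Matrix.fromBlocks (Matrix.of fun _ _ : Fin 1 => z)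
      (Matrix.of fun _ j => y j) (Matrix.of fun i _ => x i)
      (Matrix.of fun i j : Fin n => if i = j then b else a) := by
    ext i j
    cases i with
    | inl i =>
      cases j with
      | inl j =>
        have hi : i = 0 := Subsingleton.elim i 0
        have hj : j = 0 := Subsingleton.elim j 0
        subst hi; subst hj
        simp [Matrix.submatrix_apply, he0, hK00]
      | inr j =>
        have hi : i = 0 := Subsingleton.elim i 0
        subst hi
        simp [Matrix.submatrix_apply, he0, heS, hK0j]
    | inr i =>
      cases j with
      | inl j =>
        have hj : j = 0 := Subsingleton.elim j 0
        subst hj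
        simp [Matrix.submatrix_apply, he0, heS, hKi0]
      | inr j =>
        simp [Matrix.submatrix_apply, heS, hKij]
  calc K.det = (K.submatrix e e).det := (Matrix.det_submatrix_equiv_self e K).symm
    _ = _ := by rw [hsub, key n hn z a b x y]
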